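/- The set of transformations of ℝ⁴ (coordinates t, x, v, f) given by (t, x, v, f) ↦ (αt + β, κ(x + μ₁t + μ₀), (κ²/α)(v + (μ₁/2)x + (μ₁²/4)t + ν), (κ²/α)f) with α ≠ 0, κ ≠ 0, is closed under composition and inverses, i.e., it forms a group under composition. -/

import Mathlib

/-- The equivalence transformations of the class of generalized potential
Burgers equations, acting on `(t, x, v, f) ∈ ℝ⁴`. -/
def potEquiv : Set ((ℝ × ℝ × ℝ × ℝ) → (ℝ × ℝ × ℝ × ℝ)) :=
  {g | ∃ α β κ μ₁ μ₀ ν : ℝ, α ≠ 0 ∧ κ ≠ 0 ∧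
    g = fun p => (α * p.1 + β, κ * (p.2.1 + μ₁ * p.1 + μ₀),
      κ ^ 2 / α * (p.2.2.1 + μ₁ / 2 * p.2.1 + μ₁ ^ 2 / 4 * p.1 + ν),
      κ ^ 2 / α * p.2.2.2)}

set_option maxHeartbeats 2000000 in
theorem stmt6 :
    (∀ g ∈ potEquiv, ∀ h ∈ potEquiv, g ∘ h ∈ potEquiv) ∧
    (∀ g ∈ potEquiv, ∃ g' ∈ potEquiv, g ∘ g' = id ∧ g' ∘ g = id) := by
  constructor
  · rintro g ⟨α, β, κ, μ₁, μ₀, ν, hα, hκ, rfl⟩ h ⟨α', β', κ', μ₁', μ₀', ν', hα', hκ', rfl⟩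
    refine ⟨α * α', α * β' + β, κ * κ', μ₁' + μ₁ * α' / κ',
      μ₀' + (μ₁ * β' + μ₀) / κ',
      ν' + α' / κ' ^ 2 * (μ₁ * κ' * μ₀' / 2 + μ₁ ^ 2 * β' / 4 + ν),
      mul_ne_zero hα hα', mul_ne_zero hκ hκ', ?_⟩
    funext p
    simp only [Function.comp_apply, Prod.mk.injEq]
    refine ⟨by ring, by field_simp; ring, by field_simp; ring, by field_simp⟩
  · rintro g ⟨α, β, κ, μ₁, μ₀, ν, hα, hκ, rfl⟩
    refine ⟨_, ⟨1 / α, -β / α, 1 / κ, -μ₁ * κ / α, μ₁ * κ * β / α - μ₀ * κ,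
      κ ^ 2 / α * (μ₁ * μ₀ / 2 - μ₁ ^ 2 * β / (4 * α) - ν),
      by positivity, by positivity, rfl⟩, ?_, ?_⟩ <;>
    · funext p
      obtain ⟨t, x, v, f⟩ := p
      simp only [Function.comp_apply, id_eq, Prod.mk.injEq]
      and_intros <;> (field_simp; try ring)
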